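/- Let m₊ and m₋ be complex numbers with Im m₊ > 0 and Im m₋ < 0 (so m₋ ≠ m₊). Define the 2×2 matrix M with entries M₁₁ = (m₋ - m₊)^{-1}, M₁₂ = M₂₁ = (1/2)(m₋ - m₊)^{-1}(m₋ + m₊), M₂₂ = (m₋ - m₊)^{-1} m₋ m₊. Then Im M := (M - M*)/(2i) is positive semidefinite. -/

import Mathlib

set_option maxHeartbeats 1000000

open Matrix ComplexOrder

/-- The Weyl–Titchmarsh matrix built from half-line Weyl functions has positive
semidefinite imaginary part: if `Im m₊ > 0 > Im m₋`, the matrix with entries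
`M₁₁ = (m₋-m₊)⁻¹`, `M₁₂ = M₂₁ = (1/2)(m₋-m₊)⁻¹(m₋+m₊)`, `M₂₂ = (m₋-m₊)⁻¹m₋m₊`
satisfies `(M - M*)/(2i) ≥ 0`. -/
theorem weyl_matrix_posSemidef
    (mp mm : ℂ) (hmp : 0 < mp.im) (hmm : mm.im < 0)
    (M : Matrix (Fin 2) (Fin 2) ℂ)
    (hM : M = !![(mm - mp)⁻¹, (1/2) * (mm - mp)⁻¹ * (mm + mp);
                 (1/2) * (mm - mp)⁻¹ * (mm + mp), (mm - mp)⁻¹ * mm * mp]) :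
    ((2 * Complex.I)⁻¹ • (M - Mᴴ)).PosSemidef := by
  have hD : mm - mp ≠ 0 := by
    intro h
    have := congrArg Complex.im h
    simp [Complex.sub_im] at this
    linarith
  rw [posSemidef_iff_dotProduct_mulVec]
  constructor
  · unfold Matrix.IsHermitian
    rw [conjTranspose_smul, conjTranspose_sub, conjTranspose_conjTranspose]
    have : star ((2 * Complex.I)⁻¹) = -(2 * Complex.I)⁻¹ := by
      simp [Complex.ext_iff]
    rw [this]
    module
  · intro x
    have key : star x ⬝ᵥ (((2 * Complex.I)⁻¹ • (M - Mᴴ)).mulVec x) =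
        (2 * Complex.I)⁻¹ *
        ((M 0 0 - (starRingEnd ℂ) (M 0 0)) * (starRingEnd ℂ) (x 0) * x 0 +
         (M 0 1 - (starRingEnd ℂ) (M 1 0)) * (starRingEnd ℂ) (x 0) * x 1 +
         (M 1 0 - (starRingEnd ℂ) (M 0 1)) * (starRingEnd ℂ) (x 1) * x 0 +
         (M 1 1 - (starRingEnd ℂ) (M 1 1)) * (starRingEnd ℂ) (x 1) * x 1) := by
      simp [dotProduct, Matrix.mulVec, Fin.sum_univ_two, Matrix.smul_apply,
        Matrix.sub_apply, Matrix.conjTranspose_apply]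
      ring
    rw [key, hM]
    simp only [Matrix.cons_val', Matrix.cons_val_zero, Matrix.cons_val_one, Matrix.head_cons,
      Matrix.head_fin_const, Matrix.empty_val', Matrix.cons_val_fin_one, Matrix.of_apply]
    set a := mm.re with ha; set b := mm.im with hb; set c := mp.re with hc; set e := mp.im with he
    set s := (x 0).re; set t := (x 0).im; set u := (x 1).re; set v := (x 1).im
    have hk : ((a - c) * (a - c) + (b - e) * (b - e)) ≠ 0 := by
      have : Complex.normSq (mm - mp) ≠ 0 := (Complex.normSq_pos.mpr hD).ne'
      simpa [Complex.normSq_apply] using this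
    have hEq : (2 * Complex.I)⁻¹ *
        (((mm - mp)⁻¹ - (starRingEnd ℂ) (mm - mp)⁻¹) * (starRingEnd ℂ) (x 0) * x 0 +
              (1 / 2 * (mm - mp)⁻¹ * (mm + mp) - (starRingEnd ℂ) (1 / 2 * (mm - mp)⁻¹ * (mm + mp))) *
                  (starRingEnd ℂ) (x 0) *
                x 1 +
            (1 / 2 * (mm - mp)⁻¹ * (mm + mp) - (starRingEnd ℂ) (1 / 2 * (mm - mp)⁻¹ * (mm + mp))) *
                (starRingEnd ℂ) (x 1) *
              x 0 +
          ((mm - mp)⁻¹ * mm * mp - (starRingEnd ℂ) ((mm - mp)⁻¹ * mm * mp)) * (starRingEnd ℂ) (x 1) * x 1)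
        = (((e * ((s + a*u)^2 + (t + a*v)^2) + (-b) * ((s + c*u)^2 + (t + c*v)^2)
            + (b*e*(b-e)) * (u^2 + v^2)) / ((a - c) * (a - c) + (b - e) * (b - e)) : ℝ) : ℂ) := by
      apply Complex.ext <;>
      · simp only [Complex.mul_re, Complex.mul_im, Complex.add_re, Complex.add_im,
          Complex.sub_re, Complex.sub_im, Complex.inv_re, Complex.inv_im, Complex.conj_re,
          Complex.conj_im, Complex.normSq_apply, Complex.I_re, Complex.I_im, Complex.div_re,
          Complex.div_im, Complex.one_re, Complex.one_im, Complex.re_ofNat, Complex.im_ofNat,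
          Complex.ofReal_re, Complex.ofReal_im, ← ha, ← hb, ← hc, ← he]
        field_simp
        ring
    rw [hEq, Complex.zero_le_real]
    apply div_nonneg
    · nlinarith [mul_nonneg hmp.le (add_nonneg (sq_nonneg (s + a*u)) (sq_nonneg (t + a*v))),
        mul_nonneg (neg_nonneg.mpr hmm.le) (add_nonneg (sq_nonneg (s + c*u)) (sq_nonneg (t + c*v))),
        mul_nonneg (mul_nonneg (neg_nonneg.mpr hmm.le) hmp.le)
          (mul_nonneg (sub_nonneg.mpr (hmm.trans hmp).le) (add_nonneg (sq_nonneg u) (sq_nonneg v)))]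
    · exact add_nonneg (mul_self_nonneg _) (mul_self_nonneg _)
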